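/- Let C be a convex subset of a topological real vector space. Then the face relative interior operation is idempotent: fri(fri C) = fri C. -/

import Mathlib

open Pointwise

/-- A face of a convex set `C`: a convex subset `F ⊆ C` such that whenever a point of `F`
lies in the open segment between two points of `C`, both endpoints belong to `F`. -/
def IsFace {X : Type*} [AddCommGroup X] [Module ℝ X] (C F : Set X) : Prop :=
  F ⊆ C ∧ Convex ℝ F ∧
    ∀ x ∈ F, ∀ y ∈ C, ∀ z ∈ C, x ∈ openSegment ℝ y z → y ∈ F ∧ z ∈ F

/-- The minimal face of `C` containing `x`: the intersection of all faces containing `x`. -/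
def minFace {X : Type*} [AddCommGroup X] [Module ℝ X] (C : Set X) (x : X) : Set X :=
  ⋂₀ {F | IsFace C F ∧ x ∈ F}

/-- The conic hull of a set. -/
def coneHull {X : Type*} [AddCommGroup X] [Module ℝ X] (S : Set X) : Set X :=
  {w | ∃ (a : ℝ) (s : X), 0 ≤ a ∧ s ∈ S ∧ w = a • s}

/-- The intrinsic core of a convex set. -/
def icr {X : Type*} [AddCommGroup X] [Module ℝ X] (C : Set X) : Set X :=
  {x ∈ C | ∀ y ∈ C, ∃ z ∈ C, x ∈ openSegment ℝ y z}

/-- The face relative interior of a convex set in a topological vector space. -/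
def fri {X : Type*} [AddCommGroup X] [Module ℝ X] [TopologicalSpace X] (C : Set X) : Set X :=
  {x ∈ C | C ⊆ closure (minFace C x)}

section Aux

variable {X : Type*} [AddCommGroup X] [Module ℝ X]

/-- Segment transitivity: if `x` lies strictly between `a` and `b`, and `c` lies strictly
between `x` and `b`, then `x` lies strictly between `a` and `c`. -/
lemma seg_trans {a b c x : X} (h1 : x ∈ openSegment ℝ a b)
    (h2 : c ∈ openSegment ℝ x b) : x ∈ openSegment ℝ a c := by
  obtain ⟨ta, tb, hta, htb, htab, hx⟩ := h1
  obtain ⟨sa, sb, hsa, hsb, hsab, hc⟩ := h2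
  have hD : 0 < sb + tb * sa := by positivity
  refine ⟨ta * sb / (sb + tb * sa), tb / (sb + tb * sa), by positivity, by positivity, ?_, ?_⟩
  · field_simp
    linear_combination sb * htab - tb * hsab
  · rw [← hc, ← hx]
    match_scalars <;> field_simp <;> first | ring1 | (left; ring1)

/-- The set of points `y ∈ C` that can "see through" `x`, i.e. such that `x` lies in an open
segment from `y` to another point of `C`, is a face of `C` containing `x`. -/
lemma F0_isFace {C : Set X} (hC : Convex ℝ C) {x : X} (hx : x ∈ C) :
    IsFace C {y ∈ C | ∃ z ∈ C, x ∈ openSegment ℝ y z} ∧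
      x ∈ {y ∈ C | ∃ z ∈ C, x ∈ openSegment ℝ y z} := by
  constructor
  · refine ⟨fun y hy => hy.1, ?_, ?_⟩
    · -- convexity
      rintro y₁ ⟨hy₁, z₁, hz₁, p₁, q₁, hp₁, hq₁, hpq₁, he₁⟩
        y₂ ⟨hy₂, z₂, hz₂, p₂, q₂, hp₂, hq₂, hpq₂, he₂⟩ a b ha hb hab
      rcases eq_or_lt_of_le ha with rfl | ha'
      · have hb1 : b = 1 := by linarith
        subst hb1
        simpa using ⟨hy₂, z₂, hz₂, p₂, q₂, hp₂, hq₂, hpq₂, he₂⟩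
      rcases eq_or_lt_of_le hb with rfl | hb'
      · have ha1 : a = 1 := by linarith
        subst ha1
        simpa using ⟨hy₁, z₁, hz₁, p₁, q₁, hp₁, hq₁, hpq₁, he₁⟩
      set q : ℝ := max q₁ q₂ with hqdef
      have hq1le : q₁ ≤ q := le_max_left _ _
      have hq2le : q₂ ≤ q := le_max_right _ _
      have hq0 : 0 < q := lt_of_lt_of_le hq₁ hq1le
      have hqlt1 : q < 1 := max_lt (by linarith) (by linarith)
      have hz₁' : ((q - q₁)/q) • y₁ + (q₁/q) • z₁ ∈ C := by
        apply hC hy₁ hz₁ (div_nonneg (by linarith) hq0.le) (by positivity)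
        field_simp
        ring
      have hz₂' : ((q - q₂)/q) • y₂ + (q₂/q) • z₂ ∈ C := by
        apply hC hy₂ hz₂ (div_nonneg (by linarith) hq0.le) (by positivity)
        field_simp
        ring
      refine ⟨hC hy₁ hy₂ ha hb hab,
        a • (((q - q₁)/q) • y₁ + (q₁/q) • z₁) + b • (((q - q₂)/q) • y₂ + (q₂/q) • z₂),
        hC hz₁' hz₂' ha hb hab, 1 - q, q, by linarith, hq0, by ring, ?_⟩
      have key : a • (p₁ • y₁ + q₁ • z₁) + b • (p₂ • y₂ + q₂ • z₂) = x := by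
        rw [he₁, he₂, ← add_smul, hab, one_smul]
      rw [← key]
      match_scalars <;> field_simp <;>
        first
        | linear_combination (-1) * hpq₁
        | linear_combination (-1) * hpq₂
    · -- face property
      have main : ∀ w ∈ C, x ∈ openSegment ℝ w x → True := fun _ _ _ => trivial
      rintro x' ⟨hx'C, w, hwC, hxseg⟩ y hy z hz hyz
      obtain ⟨p, q, hp, hq, hpq, he⟩ := hxseg
      have key : ∀ y z : X, y ∈ C → z ∈ C → x' ∈ openSegment ℝ y z →
          y ∈ {y ∈ C | ∃ z ∈ C, x ∈ openSegment ℝ y z} := by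
        rintro y z hy hz ⟨r, s, hr, hs, hrs, he'⟩
        have hα : 1 - p * r = p * s + q := by nlinarith
        have hα0 : 0 < 1 - p * r := by nlinarith
        have hu : (p * s/(1 - p * r)) • z + (q/(1 - p * r)) • w ∈ C := by
          apply hC hz hwC (by positivity) (by positivity)
          rw [← add_div, hα, div_self (by positivity)]
        refine ⟨hy, (p * s/(1 - p * r)) • z + (q/(1 - p * r)) • w, hu,
          p * r, 1 - p * r, by positivity, hα0, by ring, ?_⟩
        rw [← he, ← he']
        match_scalars
        · ring
        · field_simp
        · field_simp
      refine ⟨key y z hy hz hyz, key z y hz hy ?_⟩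
      rwa [openSegment_symm] at hyz
  · refine ⟨hx, x, hx, ?_⟩
    rw [openSegment_same]
    exact Set.mem_singleton x

/-- If `x ∈ fri C`, `z ∈ C`, then every point of the open segment from `x` to `z`
belongs to `fri C`. -/
lemma mem_fri_of_openSegment [TopologicalSpace X] {C : Set X} (hC : Convex ℝ C)
    {x z w : X} (hx : x ∈ fri C) (hz : z ∈ C) (hw : w ∈ openSegment ℝ x z) : w ∈ fri C := by
  have hwC : w ∈ C := hC.openSegment_subset hx.1 hz hw
  refine ⟨hwC, ?_⟩
  have hsub : minFace C x ⊆ minFace C w := by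
    intro u hu
    refine Set.mem_sInter.2 fun G hG => ?_
    exact Set.mem_sInter.1 hu _ ⟨hG.1, (hG.1.2.2 w hG.2 x hx.1 z hz hw).1⟩
  exact hx.2.trans (closure_mono hsub)

end Aux

/-- the face relative interior operation is idempotent. -/
theorem fri_idempotent {X : Type*} [AddCommGroup X] [Module ℝ X] [TopologicalSpace X]
    [IsTopologicalAddGroup X] [ContinuousSMul ℝ X]
    (C : Set X) (hC : Convex ℝ C) : fri (fri C) = fri C := by
  apply Set.Subset.antisymm
  · exact fun x hx => hx.1
  · intro x hx
    have hxC : x ∈ C := hx.1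
    refine ⟨hx, ?_⟩
    intro y hy
    -- `y ∈ fri C`; goal: `y ∈ closure (minFace (fri C) x)`
    have hCface : IsFace C C := ⟨subset_rfl, hC, fun _ _ y hy z hz _ => ⟨hy, hz⟩⟩
    obtain ⟨hF₀face, hxF₀⟩ := F0_isFace hC hxC
    -- Step A: open segments from `x` to points of `minFace C x` lie in `minFace (fri C) x`.
    have hA : ∀ w ∈ minFace C x, ∀ u ∈ openSegment ℝ x w, u ∈ minFace (fri C) x := by
      intro w hw u hu
      have hwC : w ∈ C := Set.mem_sInter.1 hw C ⟨hCface, hxC⟩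
      obtain ⟨-, z, hzC, hxwz⟩ := Set.mem_sInter.1 hw _ ⟨hF₀face, hxF₀⟩
      -- hxwz : x ∈ openSegment ℝ w z
      have hufri : u ∈ fri C := mem_fri_of_openSegment hC hx hwC hu
      have hxzu : x ∈ openSegment ℝ z u := by
        refine seg_trans ?_ hu
        rwa [openSegment_symm] at hxwz
      have hz'seg : ((1:ℝ)/2) • x + ((1:ℝ)/2) • z ∈ openSegment ℝ x z :=
        ⟨1/2, 1/2, by norm_num, by norm_num, by norm_num, rfl⟩
      have hz'fri : ((1:ℝ)/2) • x + ((1:ℝ)/2) • z ∈ fri C :=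
        mem_fri_of_openSegment hC hx hzC hz'seg
      have hxuz' : x ∈ openSegment ℝ u (((1:ℝ)/2) • x + ((1:ℝ)/2) • z) := by
        refine seg_trans ?_ hz'seg
        rwa [openSegment_symm] at hxzu
      refine Set.mem_sInter.2 fun G hG => ?_
      exact (hG.1.2.2 x hG.2 u hufri _ hz'fri hxuz').1
    -- Step B: for each `t ∈ (0,1)`, the point `(1-t)•x + t•y` is in the closure.
    have hyM : y ∈ closure (minFace C x) := hx.2 hy.1
    have hB : ∀ t ∈ Set.Ioo (0:ℝ) 1, (1-t) • x + t • y ∈ closure (minFace (fri C) x) := by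
      intro t ht
      have hcont : Continuous fun w : X => (1-t) • x + t • w := by fun_prop
      have hmaps : Set.MapsTo (fun w : X => (1-t) • x + t • w)
          (minFace C x) (minFace (fri C) x) := by
        intro w hw
        exact hA w hw _ ⟨1 - t, t, by linarith [ht.2], ht.1, by ring, rfl⟩
      exact hmaps.closure hcont hyM
    -- Step C: let `t → 1`.
    have hcont2 : Continuous fun t : ℝ => (1-t) • x + t • y := by fun_prop
    have hmaps2 : Set.MapsTo (fun t : ℝ => (1-t) • x + t • y)
        (Set.Ioo (0:ℝ) 1) (closure (minFace (fri C) x)) := hB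
    have h1mem : (1:ℝ) ∈ closure (Set.Ioo (0:ℝ) 1) := by
      rw [closure_Ioo (by norm_num : (0:ℝ) ≠ 1)]
      exact Set.right_mem_Icc.2 (by norm_num)
    have := hmaps2.closure hcont2 h1mem
    rw [closure_closure] at this
    simpa using this
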